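/- Suppose the game is a constrained dynamic potential game with potential (P, R) (the exact potential condition holds for all feasible unilateral deviations), the functions P(·,·,k), R, f^i(·,·,k), and g(·,·,k) are continuous, and the set of feasible strategy profiles is nonempty and compact (as a subset of (ℝ^m)^T). Then the game admits a generalized Nash equilibrium: there exists a feasible profile γ* such that for every agent i and every strategy ν^i of agent i with (ν^i, γ^{-i*}) feasible, J^i(x_0, γ*) ≤ J^i(x_0, (ν^i, γ^{-i*})). -/

import Mathlib

/-!
Existence of a generalized Nash equilibrium in a constrained dynamic
potential game: if the game is a constrained dynamic potential game with
potential `(P, R)`, the data `P(·,·,k)`, `R`, `f^i(·,·,k)`, `g(·,·,k)`,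
`gT` are continuous, and the set of feasible strategy profiles is nonempty
and compact, then a generalized Nash equilibrium exists.

Setup: `N` agents, horizon `T`.  Agent `i` has state space `Fin (n i) → ℝ`
and action space `Fin (m i) → ℝ`; an open-loop strategy profile is
`γ : ∀ i, Fin T → (Fin (m i) → ℝ)` (an element of `(ℝ^m)^T`).  Each agent's
state evolves under its own dynamics `f i` from the initial state `x0`.
-/

/-- The joint state trajectory generated from initial state `x0` under
per-agent dynamics `f` and the open-loop strategy profile `γ` (only the
actions at steps `k < T` are used along the horizon). -/
noncomputable def traj {N T : ℕ} {n m : Fin N → ℕ}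
    (f : ∀ i : Fin N, (Fin (n i) → ℝ) → (Fin (m i) → ℝ) → ℕ → (Fin (n i) → ℝ))
    (x0 : ∀ i, Fin (n i) → ℝ) (γ : ∀ i, Fin T → Fin (m i) → ℝ) :
    ℕ → ∀ i, Fin (n i) → ℝ
  | 0 => x0
  | (k + 1) => fun i =>
      f i (traj f x0 γ k i) (if h : k < T then γ i ⟨k, h⟩ else 0) k

/-- Feasibility: the shared constraints hold along the induced trajectory at
every step of the horizon and at the terminal time. -/
def Feasible {N T c : ℕ} {n m : Fin N → ℕ}
    (f : ∀ i : Fin N, (Fin (n i) → ℝ) → (Fin (m i) → ℝ) → ℕ → (Fin (n i) → ℝ))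
    (x0 : ∀ i, Fin (n i) → ℝ)
    (g : (∀ j, Fin (n j) → ℝ) → (∀ j, Fin (m j) → ℝ) → ℕ → Fin c → ℝ)
    (gT : (∀ j, Fin (n j) → ℝ) → Fin c → ℝ)
    (γ : ∀ j, Fin T → Fin (m j) → ℝ) : Prop :=
  (∀ (k : Fin T) (l : Fin c),
      g (traj f x0 γ k) (fun j => γ j k) (k : ℕ) l ≤ 0) ∧
    (∀ l : Fin c, gT (traj f x0 γ T) l ≤ 0)

/-- Cost of agent `i`:
`J^i(x_0,γ) = S^i(x^i_T) + ∑_{k<T} L^i(x_k, u_k, k)`. -/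
noncomputable def agentCost {N T : ℕ} {n m : Fin N → ℕ}
    (f : ∀ i : Fin N, (Fin (n i) → ℝ) → (Fin (m i) → ℝ) → ℕ → (Fin (n i) → ℝ))
    (x0 : ∀ i, Fin (n i) → ℝ)
    (L : ∀ _ : Fin N, (∀ j, Fin (n j) → ℝ) → (∀ j, Fin (m j) → ℝ) → ℕ → ℝ)
    (S : ∀ i : Fin N, (Fin (n i) → ℝ) → ℝ)
    (i : Fin N) (γ : ∀ j, Fin T → Fin (m j) → ℝ) : ℝ :=
  S i (traj f x0 γ T i) +
    ∑ k : Fin T, L i (traj f x0 γ k) (fun j => γ j k) (k : ℕ)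

/-- Potential cost `J(x_0,γ) = R(x_T) + ∑_{k<T} P(x_k,u_k,k)`. -/
noncomputable def potCost {N T : ℕ} {n m : Fin N → ℕ}
    (f : ∀ i : Fin N, (Fin (n i) → ℝ) → (Fin (m i) → ℝ) → ℕ → (Fin (n i) → ℝ))
    (x0 : ∀ i, Fin (n i) → ℝ)
    (P : (∀ j, Fin (n j) → ℝ) → (∀ j, Fin (m j) → ℝ) → ℕ → ℝ)
    (R : (∀ j, Fin (n j) → ℝ) → ℝ)
    (γ : ∀ j, Fin T → Fin (m j) → ℝ) : ℝ :=
  R (traj f x0 γ T) +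
    ∑ k : Fin T, P (traj f x0 γ k) (fun j => γ j k) (k : ℕ)


private lemma traj_continuous {N T : ℕ} {n m : Fin N → ℕ}
    (f : ∀ i : Fin N, (Fin (n i) → ℝ) → (Fin (m i) → ℝ) → ℕ → (Fin (n i) → ℝ))
    (x0 : ∀ i, Fin (n i) → ℝ)
    (hfcont : ∀ (i : Fin N), ∀ k < T, Continuous
      (fun p : (Fin (n i) → ℝ) × (Fin (m i) → ℝ) => f i p.1 p.2 k))
    (k : ℕ) (hk : k ≤ T) :
    Continuous (fun γ : ∀ j, Fin T → Fin (m j) → ℝ => traj f x0 γ k) := by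
  induction k with
  | zero => exact continuous_const
  | succ k ih =>
    have hkT : k < T := hk
    have ihk := ih (le_of_lt hkT)
    refine continuous_pi fun i => ?_
    have h1 : Continuous (fun γ : ∀ j, Fin T → Fin (m j) → ℝ => traj f x0 γ k i) :=
      (continuous_apply i).comp ihk
    have h2 : Continuous (fun γ : ∀ j, Fin T → Fin (m j) → ℝ => γ i ⟨k, hkT⟩) :=
      (continuous_apply (⟨k, hkT⟩ : Fin T)).comp (continuous_apply i)
    have := (hfcont i k hkT).comp (h1.prodMk h2)
    simpa [traj, hkT, Function.comp_def] using this

/-- If the game is a constrained dynamic potential game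
with potential `(P, R)` (the exact potential identity holds for all feasible
unilateral deviations), the functions `P(·,·,k)`, `R`, `f^i(·,·,k)`,
`g(·,·,k)` and the terminal constraint `gT` are continuous, and the set of
feasible strategy profiles is nonempty and compact, then the game admits a
generalized Nash equilibrium. -/
theorem potential_game_GNE_exists
    {N T c : ℕ} (n m : Fin N → ℕ)
    (f : ∀ i : Fin N, (Fin (n i) → ℝ) → (Fin (m i) → ℝ) → ℕ → (Fin (n i) → ℝ))
    (x0 : ∀ i, Fin (n i) → ℝ)
    (L : ∀ _ : Fin N, (∀ j, Fin (n j) → ℝ) → (∀ j, Fin (m j) → ℝ) → ℕ → ℝ)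
    (S : ∀ i : Fin N, (Fin (n i) → ℝ) → ℝ)
    (P : (∀ j, Fin (n j) → ℝ) → (∀ j, Fin (m j) → ℝ) → ℕ → ℝ)
    (R : (∀ j, Fin (n j) → ℝ) → ℝ)
    (g : (∀ j, Fin (n j) → ℝ) → (∀ j, Fin (m j) → ℝ) → ℕ → Fin c → ℝ)
    (gT : (∀ j, Fin (n j) → ℝ) → Fin c → ℝ)
    (hpot : ∀ (i : Fin N) (γ : ∀ j, Fin T → Fin (m j) → ℝ) (ν : Fin T → Fin (m i) → ℝ),
      Feasible f x0 g gT γ → Feasible f x0 g gT (Function.update γ i ν) →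
      agentCost f x0 L S i γ - agentCost f x0 L S i (Function.update γ i ν)
        = potCost f x0 P R γ - potCost f x0 P R (Function.update γ i ν))
    (hPcont : ∀ k < T, Continuous
      (fun p : (∀ j, Fin (n j) → ℝ) × (∀ j, Fin (m j) → ℝ) => P p.1 p.2 k))
    (hRcont : Continuous R)
    (hfcont : ∀ (i : Fin N), ∀ k < T, Continuous
      (fun p : (Fin (n i) → ℝ) × (Fin (m i) → ℝ) => f i p.1 p.2 k))
    (hgcont : ∀ k < T, Continuous
      (fun p : (∀ j, Fin (n j) → ℝ) × (∀ j, Fin (m j) → ℝ) => g p.1 p.2 k))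
    (hgTcont : Continuous gT)
    (hne : {γ : ∀ j, Fin T → Fin (m j) → ℝ | Feasible f x0 g gT γ}.Nonempty)
    (hcompact : IsCompact {γ : ∀ j, Fin T → Fin (m j) → ℝ | Feasible f x0 g gT γ}) :
    ∃ γStar : ∀ j, Fin T → Fin (m j) → ℝ, Feasible f x0 g gT γStar ∧
      ∀ (i : Fin N) (ν : Fin T → Fin (m i) → ℝ),
        Feasible f x0 g gT (Function.update γStar i ν) →
        agentCost f x0 L S i γStar ≤ agentCost f x0 L S i (Function.update γStar i ν) := by
  have hpc : ContinuousOn (potCost f x0 P R)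
      {γ : ∀ j, Fin T → Fin (m j) → ℝ | Feasible f x0 g gT γ} := by
    refine Continuous.continuousOn ?_
    unfold potCost
    refine Continuous.add ?_ ?_
    · exact hRcont.comp (traj_continuous f x0 hfcont T le_rfl)
    · refine continuous_finset_sum _ fun k _ => ?_
      have h1 := traj_continuous f x0 hfcont k (le_of_lt k.isLt)
      have h2 : Continuous (fun γ : ∀ j, Fin T → Fin (m j) → ℝ => fun j => γ j k) :=
        continuous_pi fun j => (continuous_apply (k : Fin T)).comp (continuous_apply j)
      exact (hPcont k k.isLt).comp (h1.prodMk h2)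
  obtain ⟨γStar, hfeas, hmin⟩ := hcompact.exists_isMinOn hne hpc
  refine ⟨γStar, hfeas, fun i ν hfν => ?_⟩
  have h := hpot i γStar ν hfeas hfν
  have h2 : potCost f x0 P R γStar ≤ potCost f x0 P R (Function.update γStar i ν) :=
    hmin hfν
  linarith
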